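/- Let m, q, t be positive integers with 2 ≤ t < m and q ≥ 2. Let F = { f ∈ [1:q]^m : f_m = <Σ_{i=1}^{m−1} f_i>_q } be the row index set and let the columns be the pairs (T,b) with T = {δ_1 < … < δ_t} ⊆ [1:m] and b ∈ [1:q]^t. The cell at row f ∈ F and column (T,b) is a star if f_{δ_h} = b_h for some h ∈ [1:t]; otherwise it is non-star with label e(f,T,b) ∈ [1:q]^m defined by e_i = b_h if i = δ_h and e_i = f_i otherwise. Define φ : [1:q]^m → F by φ(e) = e if e ∈ F, and φ(e) = (e_1,…,e_{m−1}, <Σ_{i=1}^{m−1} e_i>_q) otherwise. Then: (i) for every non-star cell at (f,(T,b)) with label e, the cell at row φ(e) and column (T,b) is a star; and (ii) for every f' ∈ F, the number of pairs (e,n) such that e ∈ [1:q]^m, φ(e) = f', n is a positive integer, and some column contains at least n non-star cells with label e, equals (q−1)^t. -/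

import Mathlib

open scoped Classical

namespace ProPDA

def AB (q : ℕ) : ℕ → ℕ × ℕ
  | 0 => (1, 0)
  | (k+1) => ((q-1) * (AB q k).2, (AB q k).1 + (q-2) * (AB q k).2)

lemma AB_total (q : ℕ) (hq : 2 ≤ q) : ∀ k, (AB q k).1 + (q-1) * (AB q k).2 = (q-1)^k := by
  intro k
  induction k with
  | zero => simp [AB]
  | succ k ih =>
    obtain ⟨c, rfl⟩ : ∃ c, q = c + 2 := ⟨q - 2, by omega⟩
    have h1 : c + 2 - 1 = c + 1 := by omega
    have h2 : c + 2 - 2 = c := by omega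
    simp only [AB, pow_succ, h1, h2] at *
    nlinarith [ih]

lemma sum_erase_ite (q : ℕ) [NeZero q] (hq : 2 ≤ q) (w v : ZMod q) (Av Bv : ℕ) :
    ∑ s ∈ (Finset.univ.erase w), (if s = v then Av else Bv)
      = if w = v then (q-1) * Bv else Av + (q-2) * Bv := by
  have hcard : (Finset.univ : Finset (ZMod q)).card = q := by
    rw [Finset.card_univ, ZMod.card]
  by_cases h : w = v
  · subst h
    rw [if_pos rfl]
    rw [Finset.sum_congr rfl (fun s hs => if_neg (Finset.ne_of_mem_erase hs))]
    rw [Finset.sum_const, Finset.card_erase_of_mem (Finset.mem_univ _), hcard, smul_eq_mul]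
  · rw [if_neg h]
    have hv : v ∈ Finset.univ.erase w := Finset.mem_erase.2 ⟨fun hh => h hh.symm, Finset.mem_univ _⟩
    rw [← Finset.add_sum_erase _ _ hv, if_pos rfl]
    congr 1
    rw [Finset.sum_congr rfl (fun s hs => if_neg (Finset.ne_of_mem_erase hs))]
    rw [Finset.sum_const, Finset.card_erase_of_mem hv, Finset.card_erase_of_mem (Finset.mem_univ _), hcard, smul_eq_mul,
      show q - 1 - 1 = q - 2 from by omega]

lemma count_sum {ι : Type} [Fintype ι] [DecidableEq ι] (q : ℕ) [NeZero q] (hq : 2 ≤ q)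
    (T : Finset ι) (a : ι → ZMod q) :
    ∀ s : ZMod q,
    (Finset.univ.filter fun x : ι → ZMod q =>
        (∀ i ∈ T, x i ≠ a i) ∧ (∀ i ∉ T, x i = 0) ∧ ∑ i ∈ T, x i = s).card
      = if s = ∑ i ∈ T, a i then (AB q T.card).1 else (AB q T.card).2 := by
  induction T using Finset.induction_on with
  | empty =>
    intro s
    by_cases hs : s = 0
    · subst hs
      rw [Finset.sum_empty, if_pos rfl]
      have h0 : (Finset.univ.filter fun x : ι → ZMod q =>
          (∀ i ∈ (∅ : Finset ι), x i ≠ a i) ∧ (∀ i ∉ (∅ : Finset ι), x i = 0) ∧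
            ∑ i ∈ (∅ : Finset ι), x i = 0) = {fun _ => 0} := by
        ext x
        simp [funext_iff]
      rw [h0]
      simp [AB]
    · rw [Finset.sum_empty, if_neg hs]
      have h0 : (Finset.univ.filter fun x : ι → ZMod q =>
          (∀ i ∈ (∅ : Finset ι), x i ≠ a i) ∧ (∀ i ∉ (∅ : Finset ι), x i = 0) ∧
            ∑ i ∈ (∅ : Finset ι), x i = s) = ∅ := by
        apply Finset.eq_empty_of_forall_notMem
        intro x hx
        rw [Finset.mem_filter] at hx
        exact hs (hx.2.2.2.symm.trans (Finset.sum_empty (f := x)))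
      rw [h0]
      simp [AB]
  | @insert j T hj ih =>
    intro s
    set S := Finset.univ.filter fun x : ι → ZMod q =>
        (∀ i ∈ insert j T, x i ≠ a i) ∧ (∀ i ∉ insert j T, x i = 0) ∧
          ∑ i ∈ insert j T, x i = s with hS
    have hfib : S.card = ∑ v : ZMod q, (S.filter fun x => x j = v).card :=
      Finset.card_eq_sum_card_fiberwise (fun x _ => Finset.mem_univ (x j))
    have hne : ∀ i ∈ T, i ≠ j := fun i hi hij => hj (hij ▸ hi)
    have hmem : ∀ i, i ∉ T → i ≠ j → i ∉ insert j T := by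
      intro i h1 h2 h
      rcases Finset.mem_insert.1 h with h' | h'
      · exact h2 h'
      · exact h1 h'
    have hv : ∀ v : ZMod q, (S.filter fun x => x j = v).card
        = if v = a j then 0 else
            (if s - v = ∑ i ∈ T, a i then (AB q T.card).1 else (AB q T.card).2) := by
      intro v
      by_cases hva : v = a j
      · rw [if_pos hva, Finset.card_eq_zero]
        apply Finset.eq_empty_of_forall_notMem
        intro x hx
        rw [Finset.mem_filter, hS, Finset.mem_filter] at hx
        exact hx.1.2.1 j (Finset.mem_insert_self j T) (hx.2.trans hva)
      · rw [if_neg hva, ← ih (s - v)]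
        apply Finset.card_nbij' (fun x => Function.update x j 0) (fun y => Function.update y j v)
        · intro x hx
          rw [Finset.mem_coe, Finset.mem_filter, hS, Finset.mem_filter] at hx
          obtain ⟨⟨-, h1, h2, h3⟩, h4⟩ := hx
          refine Finset.mem_filter.2 ⟨Finset.mem_univ _, ?_, ?_, ?_⟩
          · intro i hi
            beta_reduce; rw [Function.update_of_ne (hne i hi)]
            exact h1 i (Finset.mem_insert_of_mem hi)
          · intro i hi
            by_cases hij : i = j
            · subst hij; beta_reduce; rw [Function.update_self]
            · beta_reduce; rw [Function.update_of_ne hij]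
              exact h2 i (hmem i hi hij)
          · beta_reduce; rw [Finset.sum_congr rfl (fun i hi => Function.update_of_ne (hne i hi) _ _)]
            rw [Finset.sum_insert hj, h4] at h3
            rw [← h3]; ring
        · intro y hy
          rw [Finset.mem_coe, Finset.mem_filter] at hy
          obtain ⟨-, h1, h2, h3⟩ := hy
          refine Finset.mem_filter.2 ⟨?_, Function.update_self _ _ _⟩
          rw [hS, Finset.mem_filter]
          refine ⟨Finset.mem_univ _, ?_, ?_, ?_⟩
          · intro i hi
            rcases Finset.mem_insert.1 hi with h' | h'
            · subst h'; beta_reduce; rw [Function.update_self]; exact hva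
            · beta_reduce; rw [Function.update_of_ne (hne i h')]
              exact h1 i h'
          · intro i hi
            have hij : i ≠ j := fun h => hi (h ▸ Finset.mem_insert_self j T)
            beta_reduce; rw [Function.update_of_ne hij]
            exact h2 i (fun h => hi (Finset.mem_insert_of_mem h))
          · beta_reduce; rw [Finset.sum_insert hj, Function.update_self,
              Finset.sum_congr rfl (fun i hi => Function.update_of_ne (hne i hi) _ _), h3]
            ring
        · intro x hx
          rw [Finset.mem_coe, Finset.mem_filter] at hx
          funext i
          by_cases hij : i = j
          · subst hij
            beta_reduce; rw [Function.update_self, hx.2]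
          · beta_reduce; rw [Function.update_of_ne hij, Function.update_of_ne hij]
        · intro y hy
          rw [Finset.mem_coe, Finset.mem_filter] at hy
          funext i
          by_cases hij : i = j
          · beta_reduce; rw [hij, Function.update_self, hy.2.2.1 j hj]
          · beta_reduce; rw [Function.update_of_ne hij, Function.update_of_ne hij]
    rw [hfib, Finset.sum_congr rfl (fun v _ => hv v)]
    rw [← Finset.add_sum_erase _ _ (Finset.mem_univ (a j)), if_pos rfl, zero_add]
    have hre : ∀ v ∈ Finset.univ.erase (a j),
        (if v = a j then 0 else (if s - v = ∑ i ∈ T, a i then (AB q T.card).1 else (AB q T.card).2))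
        = if v = s - ∑ i ∈ T, a i then (AB q T.card).1 else (AB q T.card).2 := by
      intro v hvv
      rw [if_neg (Finset.ne_of_mem_erase hvv)]
      congr 1
      simp only [eq_iff_iff]
      constructor
      · intro h; rw [← h]; ring
      · intro h; rw [h]; ring
    rw [Finset.sum_congr rfl hre, sum_erase_ite q hq]
    rw [Finset.card_insert_of_notMem hj, Finset.sum_insert hj]
    have hiff : (a j = s - ∑ i ∈ T, a i) ↔ (s = a j + ∑ i ∈ T, a i) := by
      constructor
      · intro h; rw [h]; ring
      · intro h; rw [h]; ring
    by_cases hc : s = a j + ∑ i ∈ T, a i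
    · rw [if_pos hc, if_pos (hiff.2 hc)]
      simp [AB]
    · rw [if_neg hc, if_neg (fun h => hc (hiff.1 h))]
      simp [AB]



noncomputable def val1 (q : ℕ) (x : Fin q) : ZMod q := (((x : ℕ) + 1 : ℕ) : ZMod q)

lemma val1_inj (q : ℕ) [NeZero q] : Function.Injective (val1 q) := by
  intro x y h
  have hq : 0 < q := Nat.pos_of_ne_zero (NeZero.ne q)
  have h2 := congrArg ZMod.val h
  rw [val1, val1, ZMod.val_natCast, ZMod.val_natCast] at h2
  have hx := x.2
  have hy := y.2
  have e1 : ((x : ℕ) + 1) % q = (x : ℕ) + 1 ∨ ((x : ℕ) + 1 = q ∧ ((x : ℕ) + 1) % q = 0) := by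
    by_cases hc : (x : ℕ) + 1 < q
    · exact Or.inl (Nat.mod_eq_of_lt hc)
    · have : (x : ℕ) + 1 = q := by omega
      exact Or.inr ⟨this, by rw [this, Nat.mod_self]⟩
  have e2 : ((y : ℕ) + 1) % q = (y : ℕ) + 1 ∨ ((y : ℕ) + 1 = q ∧ ((y : ℕ) + 1) % q = 0) := by
    by_cases hc : (y : ℕ) + 1 < q
    · exact Or.inl (Nat.mod_eq_of_lt hc)
    · have : (y : ℕ) + 1 = q := by omega
      exact Or.inr ⟨this, by rw [this, Nat.mod_self]⟩
  have : (x : ℕ) = (y : ℕ) := by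
    rcases e1 with h1 | ⟨h1, h1'⟩ <;> rcases e2 with h2' | ⟨h2', h2''⟩ <;> omega
  exact Fin.ext this

noncomputable def val1E (q : ℕ) [NeZero q] : Fin q ≃ ZMod q :=
  Equiv.ofBijective (val1 q)
    ((Fintype.bijective_iff_injective_and_card _).2
      ⟨val1_inj q, by rw [Fintype.card_fin, ZMod.card]⟩)

@[simp] lemma val1E_apply (q : ℕ) [NeZero q] (x : Fin q) : val1E q x = val1 q x := rfl

@[simp] lemma val1_symmE (q : ℕ) [NeZero q] (v : ZMod q) : val1 q ((val1E q).symm v) = v :=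
  (val1E q).apply_symm_apply v

@[simp] lemma symmE_val1 (q : ℕ) [NeZero q] (x : Fin q) : (val1E q).symm (val1 q x) = x :=
  (val1E q).symm_apply_apply x

lemma symmE_ne (q : ℕ) [NeZero q] {v : ZMod q} {x : Fin q} (h : v ≠ val1 q x) :
    (val1E q).symm v ≠ x := by
  intro hh
  exact h (by rw [← hh, val1_symmE])

lemma bridge (m q : ℕ) [NeZero q] (hq : 2 ≤ q) (inF : (Fin m → Fin q) → Prop) (L : Fin m)
    (hiff : ∀ f : Fin m → Fin q,
      inF f ↔ val1 q (f L) = ∑ i ∈ Finset.univ.erase L, val1 q (f i))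
    (e : Fin m → Fin q) (T : Finset (Fin m)) :
    (Finset.univ.filter fun f : Fin m → Fin q =>
        inF f ∧ (∀ i ∈ T, f i ≠ e i) ∧ (∀ i ∉ T, f i = e i)).card
      = if inF e then (AB q T.card).1 else (AB q T.card).2 := by
  by_cases hL : L ∈ T
  · -- case L ∈ T
    set T' := T.erase L with hT'
    have hT'sub : T' ⊆ Finset.univ.erase L := fun i hi =>
      Finset.mem_erase.2 ⟨(Finset.mem_erase.1 hi).1, Finset.mem_univ _⟩
    have hsplit : ∀ g : Fin m → ZMod q,
        ∑ i ∈ Finset.univ.erase L, g i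
          = ∑ i ∈ (Finset.univ.erase L) \ T', g i + ∑ i ∈ T', g i :=
      fun g => (Finset.sum_sdiff hT'sub).symm
    have hmem' : ∀ i, i ∈ (Finset.univ.erase L) \ T' ↔ (i ≠ L ∧ i ∉ T) := by
      intro i
      rw [Finset.mem_sdiff, Finset.mem_erase, hT']
      simp only [Finset.mem_univ, and_true, Finset.mem_erase]
      tauto
    set C := ∑ i ∈ (Finset.univ.erase L) \ T', val1 q (e i) with hC
    set s₁ := val1 q (e L) - C with hs₁
    set SRC := Finset.univ.filter fun f : Fin m → Fin q =>
        inF f ∧ (∀ i ∈ T, f i ≠ e i) ∧ (∀ i ∉ T, f i = e i) with hSRC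
    -- every f in SRC: val1 (f L) = C + key f
    have hkey : ∀ f ∈ SRC, val1 q (f L) = C + ∑ i ∈ T', val1 q (f i) := by
      intro f hf
      rw [hSRC, Finset.mem_filter] at hf
      obtain ⟨-, h1, h2, h3⟩ := hf
      have := (hiff f).1 h1
      rw [hsplit (fun i => val1 q (f i))] at this
      rw [this]
      congr 1
      apply Finset.sum_congr rfl
      intro i hi
      rw [h3 i ((hmem' i).1 hi).2]
    have hkne : ∀ f ∈ SRC, (∑ i ∈ T', val1 q (f i)) ∈ Finset.univ.erase s₁ := by
      intro f hf
      refine Finset.mem_erase.2 ⟨?_, Finset.mem_univ _⟩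
      intro hcontra
      have h4 := hkey f hf
      rw [hcontra, hs₁, add_sub_cancel] at h4
      have : f L = e L := val1_inj q h4
      rw [hSRC, Finset.mem_filter] at hf
      exact hf.2.2.1 L hL this
    rw [Finset.card_eq_sum_card_fiberwise hkne]
    have hfibcard : ∀ s ∈ Finset.univ.erase s₁,
        (SRC.filter fun f => (∑ i ∈ T', val1 q (f i)) = s).card
          = if s = ∑ i ∈ T', val1 q (e i) then (AB q T'.card).1 else (AB q T'.card).2 := by
      intro s hs
      have hsne : s ≠ s₁ := Finset.ne_of_mem_erase hs
      rw [← count_sum q hq T' (fun i => val1 q (e i)) s]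
      apply Finset.card_nbij' (fun f k => if k ∈ T' then val1 q (f k) else 0)
        (fun x k => if k ∈ T' then (val1E q).symm (x k)
          else if k = L then (val1E q).symm (C + s) else e k)
      · intro f hf
        rw [Finset.mem_coe, Finset.mem_filter] at hf
        obtain ⟨hfS, hfs⟩ := hf
        have hmemS := hfS
        rw [hSRC, Finset.mem_filter] at hmemS
        obtain ⟨-, h1, h2, h3⟩ := hmemS
        simp only [Finset.mem_coe, Finset.mem_filter, Finset.mem_univ, true_and]
        refine ⟨?_, ?_, ?_⟩
        · intro i hi
          simp only [if_pos hi]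
          exact fun hcontra => h2 i (Finset.mem_of_mem_erase hi) (val1_inj q hcontra)
        · intro i hi
          simp only [if_neg hi]
        · beta_reduce
          rw [Finset.sum_congr rfl (fun i (hi : i ∈ T') => if_pos hi), hfs]
      · intro x hx
        simp only [Finset.mem_coe, Finset.mem_filter, Finset.mem_univ, true_and] at hx
        obtain ⟨h1, h2, h3⟩ := hx
        simp only [Finset.mem_coe, Finset.mem_filter]
        refine ⟨?_, ?_⟩
        · rw [hSRC, Finset.mem_filter]
          refine ⟨Finset.mem_univ _, ?_, ?_, ?_⟩
          · -- inF
            rw [hiff]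
            beta_reduce
            have hLL : L ∉ T' := fun h => (Finset.mem_erase.1 h).1 rfl
            rw [if_neg hLL, if_pos rfl, val1_symmE]
            rw [hsplit]
            have e1 : ∑ i ∈ (Finset.univ.erase L) \ T',
                val1 q (if i ∈ T' then (val1E q).symm (x i)
                  else if i = L then (val1E q).symm (C + s) else e i) = C := by
              rw [hC]
              apply Finset.sum_congr rfl
              intro i hi
              obtain ⟨hiL, hiT⟩ := (hmem' i).1 hi
              have hiT' : i ∉ T' := fun h => hiT (Finset.mem_of_mem_erase h)
              rw [if_neg hiT', if_neg hiL]
            have e2 : ∑ i ∈ T',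
                val1 q (if i ∈ T' then (val1E q).symm (x i)
                  else if i = L then (val1E q).symm (C + s) else e i) = s := by
              rw [← h3]
              apply Finset.sum_congr rfl
              intro i hi
              rw [if_pos hi, val1_symmE]
            rw [e1, e2]
          · -- ∀ i ∈ T, ≠ e i
            intro i hi
            beta_reduce
            by_cases hiT' : i ∈ T'
            · rw [if_pos hiT']
              exact symmE_ne q (h1 i hiT')
            · have hiL : i = L := by
                by_contra hiL
                exact hiT' (Finset.mem_erase.2 ⟨hiL, hi⟩)
              rw [if_neg hiT', if_pos hiL, hiL]
              apply symmE_ne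
              intro hcontra
              apply hsne
              rw [hs₁, ← hcontra]
              ring
          · -- ∀ i ∉ T, = e i
            intro i hi
            beta_reduce
            have hiT' : i ∉ T' := fun h => hi (Finset.mem_of_mem_erase h)
            have hiL : i ≠ L := fun h => hi (h ▸ hL)
            rw [if_neg hiT', if_neg hiL]
        · -- key value = s
          beta_reduce
          rw [← h3]
          apply Finset.sum_congr rfl
          intro i hi
          rw [if_pos hi, val1_symmE]
      · -- left inverse
        intro f hf
        rw [Finset.mem_coe, Finset.mem_filter] at hf
        obtain ⟨hfS, hfs⟩ := hf
        have h4 := hkey f hfS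
        rw [hSRC, Finset.mem_filter] at hfS
        obtain ⟨-, h1, h2, h3⟩ := hfS
        funext k
        beta_reduce
        by_cases hk : k ∈ T'
        · simp only [if_pos hk, symmE_val1]
        · by_cases hkL : k = L
          · simp only [if_neg hk, if_pos hkL]
            rw [hkL, ← hfs, ← h4, symmE_val1]
          · simp only [if_neg hk, if_neg hkL]
            have : k ∉ T := by
              intro hkT
              exact hk (Finset.mem_erase.2 ⟨hkL, hkT⟩)
            rw [h3 k this]
      · -- right inverse
        intro x hx
        simp only [Finset.mem_coe, Finset.mem_filter, Finset.mem_univ, true_and] at hx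
        obtain ⟨h1, h2, h3⟩ := hx
        funext k
        beta_reduce
        by_cases hk : k ∈ T'
        · simp only [if_pos hk, val1_symmE]
        · simp only [if_neg hk]
          rw [h2 k hk]
    rw [Finset.sum_congr rfl hfibcard]
    rw [sum_erase_ite q hq]
    have hiffe : inF e ↔ s₁ = ∑ i ∈ T', val1 q (e i) := by
      rw [hiff, hsplit (fun i => val1 q (e i)), hs₁, hC]
      constructor
      · intro h; rw [h]; ring
      · intro h
        rw [sub_eq_iff_eq_add] at h
        rw [h]; ring
    have hcardT : T.card = T'.card + 1 := (Finset.card_erase_add_one hL).symm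
    by_cases he : inF e
    · rw [if_pos (hiffe.1 he), if_pos he, hcardT]
      simp [AB]
    · rw [if_neg (fun h => he (hiffe.2 h)), if_neg he, hcardT]
      simp [AB]
  · -- case L ∉ T
    have hTsub : T ⊆ Finset.univ.erase L := fun i hi =>
      Finset.mem_erase.2 ⟨fun h => hL (h ▸ hi), Finset.mem_univ _⟩
    have hsplit : ∀ g : Fin m → ZMod q,
        ∑ i ∈ Finset.univ.erase L, g i
          = ∑ i ∈ (Finset.univ.erase L) \ T, g i + ∑ i ∈ T, g i :=
      fun g => (Finset.sum_sdiff hTsub).symm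
    set C := ∑ i ∈ (Finset.univ.erase L) \ T, val1 q (e i) with hC
    set s₀ := val1 q (e L) - C with hs₀
    have hiffe : (s₀ = ∑ i ∈ T, val1 q (e i)) ↔ inF e := by
      rw [hiff, hsplit (fun i => val1 q (e i)), hs₀, hC]
      constructor
      · intro h
        rw [sub_eq_iff_eq_add] at h
        rw [h]; ring
      · intro h; rw [h]; ring
    have hcards : (Finset.univ.filter fun f : Fin m → Fin q =>
        inF f ∧ (∀ i ∈ T, f i ≠ e i) ∧ (∀ i ∉ T, f i = e i)).card
        = (Finset.univ.filter fun x : Fin m → ZMod q =>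
            (∀ i ∈ T, x i ≠ val1 q (e i)) ∧ (∀ i ∉ T, x i = 0) ∧
              ∑ i ∈ T, x i = s₀).card := by
      apply Finset.card_nbij' (fun f k => if k ∈ T then val1 q (f k) else 0)
        (fun x k => if k ∈ T then (val1E q).symm (x k) else e k)
      · intro f hf
        rw [Finset.mem_coe, Finset.mem_filter] at hf
        obtain ⟨-, h1, h2, h3⟩ := hf
        simp only [Finset.mem_coe, Finset.mem_filter, Finset.mem_univ, true_and]
        refine ⟨?_, ?_, ?_⟩
        · intro i hi
          simp only [if_pos hi]
          exact fun hcontra => h2 i hi (val1_inj q hcontra)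
        · intro i hi
          simp only [if_neg hi]
        · beta_reduce
          rw [Finset.sum_congr rfl (fun i (hi : i ∈ T) => if_pos (hi : i ∈ T))]
          have h4 := (hiff f).1 h1
          rw [hsplit (fun i => val1 q (f i))] at h4
          have e1 : ∑ i ∈ (Finset.univ.erase L) \ T, val1 q (f i) = C := by
            rw [hC]
            apply Finset.sum_congr rfl
            intro i hi
            rw [h3 i (Finset.mem_sdiff.1 hi).2]
          have e2 : f L = e L := h3 L hL
          rw [e1, e2] at h4
          rw [hs₀, h4]
          ring
      · intro x hx
        simp only [Finset.mem_coe, Finset.mem_filter, Finset.mem_univ, true_and] at hx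
        obtain ⟨h1, h2, h3⟩ := hx
        simp only [Finset.mem_coe, Finset.mem_filter, Finset.mem_univ, true_and]
        refine ⟨?_, ?_, ?_⟩
        · -- inF
          rw [hiff]
          beta_reduce
          rw [if_neg hL]
          rw [hsplit]
          have e1 : ∑ i ∈ (Finset.univ.erase L) \ T,
              val1 q (if i ∈ T then (val1E q).symm (x i) else e i) = C := by
            rw [hC]
            apply Finset.sum_congr rfl
            intro i hi
            rw [if_neg (Finset.mem_sdiff.1 hi).2]
          have e2 : ∑ i ∈ T,
              val1 q (if i ∈ T then (val1E q).symm (x i) else e i) = s₀ := by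
            rw [← h3]
            apply Finset.sum_congr rfl
            intro i hi
            rw [if_pos hi, val1_symmE]
          rw [e1, e2, hs₀]
          ring
        · intro i hi
          beta_reduce
          rw [if_pos hi]
          exact symmE_ne q (h1 i hi)
        · intro i hi
          beta_reduce
          rw [if_neg hi]
      · intro f hf
        rw [Finset.mem_coe, Finset.mem_filter] at hf
        obtain ⟨-, h1, h2, h3⟩ := hf
        funext k
        beta_reduce
        by_cases hk : k ∈ T
        · simp only [if_pos hk, symmE_val1]
        · simp only [if_neg hk]
          rw [h3 k hk]
      · intro x hx
        simp only [Finset.mem_coe, Finset.mem_filter, Finset.mem_univ, true_and] at hx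
        obtain ⟨h1, h2, h3⟩ := hx
        funext k
        beta_reduce
        by_cases hk : k ∈ T
        · simp only [if_pos hk, val1_symmE]
        · simp only [if_neg hk]
          rw [h2 k hk]
    have hcs := count_sum q hq T (fun i => val1 q (e i)) s₀
    beta_reduce at hcs
    by_cases he : inF e
    · rw [if_pos (hiffe.2 he)] at hcs
      rw [if_pos he]
      exact hcards.trans (by convert hcs using 2 <;> (ext x; simp only [Finset.mem_filter]))
    · rw [if_neg (fun h => he (hiffe.1 h))] at hcs
      rw [if_neg he]
      exact hcards.trans (by convert hcs using 2 <;> (ext x; simp only [Finset.mem_filter]))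

end ProPDA

open Finset ProPDA

/-- Proposition 2: the PDA of Construction 5 satisfies Condition 1 with `λ = 1`.
Vectors in `[1:q]^m` are encoded 0-based as `f : Fin m → Fin q` (the paper's value of
coordinate `i` is `(f i : ℕ) + 1`), the row set is
`F = {f : f_m = <Σ_{i<m} f_i>_q}`, encoded by the predicate `inF` below, and a column is a pair
`(T, b)` with `T : Finset (Fin m)`, `|T| = t`, `b : Fin m → Fin q` (only the values of `b` on
`T` matter). The cell at `(f,(T,b))` is a star iff `f` agrees with `b` on some index of `T`;
otherwise its label is `e(f,T,b) = (fun i => if i ∈ T then b i else f i)`.  The map `φ` sends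
`e` to `e` when `e ∈ F`, and otherwise corrects the last coordinate to `<Σ_{i<m} e_i>_q`
(0-based: `(Σ_{i<m}((e i)+1) - 1) % q`).
(i) For every non-star cell with label `e`, the cell at row `φ(e)` in the same column is a star.
(ii) For every `f' ∈ F`, the number of pairs `(e,n)` with `φ(e) = f'`, `n ≥ 1`, and some column
containing at least `n` non-star cells labelled `e`, equals `(q-1)^t`. -/
theorem proPDAOA (m q t : ℕ) (ht : 2 ≤ t) (htm : t < m) (hq : 2 ≤ q)
    (inF : (Fin m → Fin q) → Prop)
    (hinF : ∀ f : Fin m → Fin q, inF f ↔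
      ((f ⟨m - 1, by omega⟩ : ℕ) + 1 =
        ((∑ i ∈ Finset.univ.erase (⟨m - 1, by omega⟩ : Fin m), ((f i : ℕ) + 1)) - 1) % q + 1))
    (phi : (Fin m → Fin q) → (Fin m → Fin q))
    (hphi : ∀ e : Fin m → Fin q,
      (inF e → phi e = e) ∧
      (¬ inF e → phi e = Function.update e ⟨m - 1, by omega⟩
        ⟨((∑ i ∈ Finset.univ.erase (⟨m - 1, by omega⟩ : Fin m), ((e i : ℕ) + 1)) - 1) % q,
          Nat.mod_lt _ (by omega)⟩)) :
    -- (i) the row `φ(e)` is a star row for every occurrence of the label `e`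
    (∀ (f : Fin m → Fin q), inF f →
      ∀ (T : Finset (Fin m)), T.card = t →
      ∀ (b : Fin m → Fin q), (∀ i ∈ T, f i ≠ b i) →
        ∃ i ∈ T, phi (fun i => if i ∈ T then b i else f i) i = b i) ∧
    -- (ii) each fiber of `φ` over `F` collects exactly `(q-1)^t` distinct PDA symbols `(e,n)`
    (∀ f' : Fin m → Fin q, inF f' →
      Set.ncard {p : (Fin m → Fin q) × ℕ |
        phi p.1 = f' ∧ 1 ≤ p.2 ∧
        ∃ (T : Finset (Fin m)) (b : Fin m → Fin q), T.card = t ∧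
          p.2 ≤ (Finset.univ.filter fun f : Fin m → Fin q =>
            inF f ∧ (∀ i ∈ T, f i ≠ b i) ∧
              (fun i => if i ∈ T then b i else f i) = p.1).card} = (q - 1) ^ t) := by
  haveI : NeZero q := ⟨by omega⟩
  have hm : 2 ≤ m := by omega
  set L : Fin m := ⟨m - 1, by omega⟩ with hLdef
  -- basic sum facts
  have hSpos : ∀ f : Fin m → Fin q,
      1 ≤ ∑ i ∈ Finset.univ.erase L, ((f i : ℕ) + 1) := by
    intro f
    have h0 : (⟨0, by omega⟩ : Fin m) ∈ Finset.univ.erase L := by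
      refine Finset.mem_erase.2 ⟨?_, Finset.mem_univ _⟩
      intro h
      have := congrArg Fin.val h
      simp only [hLdef] at this
      omega
    calc 1 ≤ (f ⟨0, by omega⟩ : ℕ) + 1 := by omega
    _ ≤ _ := Finset.single_le_sum (f := fun i => (f i : ℕ) + 1) (fun i _ => by omega) h0
  -- the ZMod characterisation of inF
  have key : ∀ f : Fin m → Fin q,
      ∑ i ∈ Finset.univ.erase L, val1 q (f i)
        = val1 q (⟨((∑ i ∈ Finset.univ.erase L, ((f i : ℕ) + 1)) - 1) % q,
            Nat.mod_lt _ (by omega)⟩ : Fin q) := by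
    intro f
    set S := ∑ i ∈ Finset.univ.erase L, ((f i : ℕ) + 1) with hS
    have h1 : ∑ i ∈ Finset.univ.erase L, val1 q (f i) = ((S : ℕ) : ZMod q) := by
      rw [hS, Nat.cast_sum]
      rfl
    rw [h1]
    show ((S : ℕ) : ZMod q) = (((S - 1) % q + 1 : ℕ) : ZMod q)
    have h3 : (S - 1) + 1 = S := Nat.sub_add_cancel (hSpos f)
    calc ((S : ℕ) : ZMod q) = (((S - 1) + 1 : ℕ) : ZMod q) := by rw [h3]
    _ = ((S - 1 : ℕ) : ZMod q) + 1 := by push_cast; ring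
    _ = (((S - 1) % q : ℕ) : ZMod q) + 1 := by rw [ZMod.natCast_mod]
    _ = (((S - 1) % q + 1 : ℕ) : ZMod q) := by push_cast; ring
  have hiff : ∀ f : Fin m → Fin q,
      inF f ↔ val1 q (f L) = ∑ i ∈ Finset.univ.erase L, val1 q (f i) := by
    intro f
    rw [hinF f, key f]
    constructor
    · intro h
      have : f L = (⟨((∑ i ∈ Finset.univ.erase L, ((f i : ℕ) + 1)) - 1) % q,
          Nat.mod_lt _ (by omega)⟩ : Fin q) := Fin.ext (by simp only [Fin.val_mk]; omega)
      rw [this]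
    · intro h
      have h4 := val1_inj q h
      have h5 := congrArg Fin.val h4
      simp only [Fin.val_mk] at h5
      omega
  refine ⟨?_, ?_⟩
  · -- part (i)
    intro f hf T hT b hb
    obtain ⟨a1, ha1, a2, ha2, ha12⟩ := Finset.one_lt_card.1 (by omega : 1 < T.card)
    obtain ⟨i, hi, hiL⟩ : ∃ i ∈ T, i ≠ L := by
      by_cases haL : a1 = L
      · exact ⟨a2, ha2, fun h => ha12 (haL.trans h.symm)⟩
      · exact ⟨a1, ha1, haL⟩
    refine ⟨i, hi, ?_⟩
    by_cases he : inF (fun i => if i ∈ T then b i else f i)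
    · rw [(hphi _).1 he]
      simp only [if_pos hi]
    · rw [(hphi _).2 he]
      rw [Function.update_of_ne hiL]
      simp only [if_pos hi]
  · -- part (ii)
    intro f' hf'
    set C : (Fin m → Fin q) → ℕ := fun e => if inF e then (AB q t).1 else (AB q t).2 with hCdef
    -- uniqueness of the F-element within a fiber
    have huniq : ∀ e : Fin m → Fin q, (∀ i, i ≠ L → e i = f' i) → inF e → e = f' := by
      intro e hefib he
      have hsum : ∑ i ∈ Finset.univ.erase L, ((e i : ℕ) + 1)
          = ∑ i ∈ Finset.univ.erase L, ((f' i : ℕ) + 1) :=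
        Finset.sum_congr rfl (fun i hi => by rw [hefib i (Finset.mem_erase.1 hi).1])
      have h1 := (hinF e).1 he
      have h2 := (hinF f').1 hf'
      funext i
      by_cases hiL : i = L
      · subst hiL
        apply Fin.ext
        rw [hsum] at h1
        omega
      · exact hefib i hiL
    -- value of phi at L for non-F fiber elements
    have hfibL : ∀ e : Fin m → Fin q, (∀ i, i ≠ L → e i = f' i) →
        (⟨((∑ i ∈ Finset.univ.erase L, ((e i : ℕ) + 1)) - 1) % q,
          Nat.mod_lt _ (by omega)⟩ : Fin q) = f' L := by
      intro e hefib
      have hsum : ∑ i ∈ Finset.univ.erase L, ((e i : ℕ) + 1)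
          = ∑ i ∈ Finset.univ.erase L, ((f' i : ℕ) + 1) :=
        Finset.sum_congr rfl (fun i hi => by rw [hefib i (Finset.mem_erase.1 hi).1])
      have h2 := (hinF f').1 hf'
      apply Fin.ext
      simp only [Fin.val_mk]
      rw [hsum]
      omega
    -- fiber characterisation
    have hfib : ∀ e : Fin m → Fin q, phi e = f' ↔ (∀ i, i ≠ L → e i = f' i) := by
      intro e
      constructor
      · intro h
        by_cases he : inF e
        · rw [(hphi e).1 he] at h
          intro i _
          rw [h]
        · rw [(hphi e).2 he] at h
          intro i hiL
          rw [← h, Function.update_of_ne hiL]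
      · intro hefib
        by_cases he : inF e
        · rw [(hphi e).1 he]
          exact huniq e hefib he
        · rw [(hphi e).2 he]
          funext i
          by_cases hiL : i = L
          · subst hiL
            rw [Function.update_self]
            exact hfibL e hefib
          · rw [Function.update_of_ne hiL]
            exact hefib i hiL
    -- the filter in the statement versus the bridge filter
    have hfilter : ∀ (e : Fin m → Fin q) (T : Finset (Fin m)) (b : Fin m → Fin q),
        (∀ i ∈ T, b i = e i) →
        ∀ n : ℕ, n ≤ (Finset.univ.filter fun f : Fin m → Fin q =>
            inF f ∧ (∀ i ∈ T, f i ≠ b i) ∧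
              (fun i => if i ∈ T then b i else f i) = e).card
          ↔ n ≤ (Finset.univ.filter fun f : Fin m → Fin q =>
            inF f ∧ (∀ i ∈ T, f i ≠ e i) ∧ (∀ i ∉ T, f i = e i)).card := by
      intro e T b hbe n
      constructor
      · intro hn
        refine hn.trans (Finset.card_le_card ?_)
        intro f hf
        rw [Finset.mem_filter] at hf
        obtain ⟨h0, h1, h2, h3⟩ := hf
        refine Finset.mem_filter.2 ⟨h0, h1, ?_, ?_⟩
        · intro i hi
          rw [← hbe i hi]
          exact h2 i hi
        · intro i hi
          have := congrFun h3 i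
          beta_reduce at this
          rwa [if_neg hi] at this
      · intro hn
        refine hn.trans (Finset.card_le_card ?_)
        intro f hf
        rw [Finset.mem_filter] at hf
        obtain ⟨h0, h1, h2, h3⟩ := hf
        refine Finset.mem_filter.2 ⟨h0, h1, ?_, ?_⟩
        · intro i hi
          rw [hbe i hi]
          exact h2 i hi
        · funext i
          beta_reduce
          by_cases hi : i ∈ T
          · rw [if_pos hi]
            exact hbe i hi
          · rw [if_neg hi]
            exact h3 i hi
    -- membership characterisation
    have hmemS : ∀ (e : Fin m → Fin q) (n : ℕ),
        (phi e = f' ∧ 1 ≤ n ∧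
          ∃ (T : Finset (Fin m)) (b : Fin m → Fin q), T.card = t ∧
            n ≤ (Finset.univ.filter fun f : Fin m → Fin q =>
              inF f ∧ (∀ i ∈ T, f i ≠ b i) ∧
                (fun i => if i ∈ T then b i else f i) = e).card)
        ↔ ((∀ i, i ≠ L → e i = f' i) ∧ 1 ≤ n ∧ n ≤ C e) := by
      intro e n
      rw [hfib e]
      constructor
      · rintro ⟨h1, h2, T, b, hT, hn⟩
        refine ⟨h1, h2, ?_⟩
        by_cases hbe : ∀ i ∈ T, b i = e i
        · rw [hfilter e T b hbe n] at hn
          rw [bridge m q hq inF L hiff e T, hT] at hn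
          exact hn
        · push_neg at hbe
          obtain ⟨i0, hi0, hbi0⟩ := hbe
          exfalso
          have hempty : (Finset.univ.filter fun f : Fin m → Fin q =>
              inF f ∧ (∀ i ∈ T, f i ≠ b i) ∧
                (fun i => if i ∈ T then b i else f i) = e).card = 0 := by
            rw [Finset.card_eq_zero]
            apply Finset.eq_empty_of_forall_notMem
            intro f hf
            rw [Finset.mem_filter] at hf
            have := congrFun hf.2.2.2 i0
            beta_reduce at this
            rw [if_pos hi0] at this
            exact hbi0 this
          rw [hempty] at hn
          omega
      · rintro ⟨h1, h2, hn⟩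
        obtain ⟨T₀, -, hT₀⟩ := Finset.exists_subset_card_eq (s := (Finset.univ : Finset (Fin m))) (n := t)
          (by rw [Finset.card_univ, Fintype.card_fin]; omega)
        refine ⟨h1, h2, T₀, e, hT₀, ?_⟩
        rw [hfilter e T₀ e (fun i _ => rfl) n]
        rw [bridge m q hq inF L hiff e T₀, hT₀]
        exact hn
    -- the explicit finset
    set fib : Finset (Fin m → Fin q) :=
      Finset.univ.filter (fun e => ∀ i, i ≠ L → e i = f' i) with hfibdef
    set Sf : Finset ((Fin m → Fin q) × ℕ) :=
      fib.biUnion (fun e => {e} ×ˢ Finset.Icc 1 (C e)) with hSfdef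
    have hset : {p : (Fin m → Fin q) × ℕ |
        phi p.1 = f' ∧ 1 ≤ p.2 ∧
        ∃ (T : Finset (Fin m)) (b : Fin m → Fin q), T.card = t ∧
          p.2 ≤ (Finset.univ.filter fun f : Fin m → Fin q =>
            inF f ∧ (∀ i ∈ T, f i ≠ b i) ∧
              (fun i => if i ∈ T then b i else f i) = p.1).card} = ↑Sf := by
      ext ⟨e, n⟩
      rw [Set.mem_setOf_eq, hmemS e n, Finset.mem_coe, hSfdef, Finset.mem_biUnion]
      constructor
      · rintro ⟨h1, h2, h3⟩
        refine ⟨e, ?_, ?_⟩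
        · rw [hfibdef, Finset.mem_filter]
          exact ⟨Finset.mem_univ _, h1⟩
        · rw [Finset.mem_product, Finset.mem_singleton, Finset.mem_Icc]
          exact ⟨rfl, h2, h3⟩
      · rintro ⟨e', he', hp⟩
        rw [Finset.mem_product, Finset.mem_singleton, Finset.mem_Icc] at hp
        obtain ⟨he, h2, h3⟩ := hp
        cases he
        rw [hfibdef, Finset.mem_filter] at he'
        exact ⟨he'.2, h2, h3⟩
    rw [hset, Set.ncard_coe_finset]
    -- compute the cardinality
    have hdisj : ∀ e1 ∈ fib, ∀ e2 ∈ fib, e1 ≠ e2 →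
        Disjoint ({e1} ×ˢ Finset.Icc 1 (C e1)) ({e2} ×ˢ Finset.Icc 1 (C e2)) := by
      intro e1 _ e2 _ hne
      rw [Finset.disjoint_left]
      intro p hp1 hp2
      rw [Finset.mem_product, Finset.mem_singleton] at hp1 hp2
      exact hne (hp1.1.symm.trans hp2.1)
    rw [Finset.card_biUnion hdisj]
    have hterm : ∀ e ∈ fib, ({e} ×ˢ Finset.Icc 1 (C e)).card = C e := by
      intro e _
      rw [Finset.card_product, Finset.card_singleton, Nat.card_Icc, one_mul]
      omega
    rw [Finset.sum_congr rfl hterm]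
    -- split the fiber
    have hfilfib : fib.filter inF = {f'} := by
      ext e
      rw [Finset.mem_filter, Finset.mem_singleton, hfibdef, Finset.mem_filter]
      constructor
      · rintro ⟨⟨-, h1⟩, h2⟩
        exact huniq e h1 h2
      · rintro rfl
        exact ⟨⟨Finset.mem_univ _, fun i _ => rfl⟩, hf'⟩
    have hfibcard : fib.card = q := by
      have : fib.card = (Finset.univ : Finset (Fin q)).card := by
        apply Finset.card_nbij' (fun e => e L) (fun v => Function.update f' L v)
        · intro e _; exact Finset.mem_univ _
        · intro v _
          rw [Finset.mem_coe, hfibdef, Finset.mem_filter]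
          exact ⟨Finset.mem_univ _, fun i hi => Function.update_of_ne hi _ _⟩
        · intro e he
          rw [Finset.mem_coe, hfibdef, Finset.mem_filter] at he
          funext i
          by_cases hiL : i = L
          · subst hiL; beta_reduce; rw [Function.update_self]
          · beta_reduce; rw [Function.update_of_ne hiL]
            exact (he.2 i hiL).symm
        · intro v _
          exact Function.update_self _ _ _
      rw [this, Finset.card_univ, Fintype.card_fin]
    rw [← Finset.sum_filter_add_sum_filter_not fib inF]
    have hsum1 : ∑ e ∈ fib.filter inF, C e = (AB q t).1 := by
      rw [hfilfib, Finset.sum_singleton, hCdef]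
      simp only [if_pos hf']
    have hsum2 : ∑ e ∈ fib.filter (fun e => ¬ inF e), C e = (q - 1) * (AB q t).2 := by
      have hterm2 : ∀ e ∈ fib.filter (fun e => ¬ inF e), C e = (AB q t).2 := by
        intro e he
        rw [Finset.mem_filter] at he
        rw [hCdef]
        simp only [if_neg he.2]
      rw [Finset.sum_congr rfl hterm2, Finset.sum_const, smul_eq_mul]
      congr 1
      have := Finset.card_filter_add_card_filter_not (s := fib) (p := inF)
      rw [hfilfib, Finset.card_singleton, hfibcard] at this
      omega
    rw [hsum1, hsum2]
    exact AB_total q hq t
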